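/- For integers β > 0 and α, if f ∈ F(y,z) is σ_y^β σ_z^{−α}-summable, then f is (σ_y,σ_z)-summable. -/

import Mathlib

/-- Any integer power difference `τ^n a - a` is `τ`-summable. -/
lemma zpow_sub_self_summable {K : Type*} [Field K] (τ : K ≃+* K) (n : ℤ) (a : K) :
    ∃ h : K, (τ ^ n) a - a = τ h - h := by
  induction n using Int.induction_on with
  | zero =>
    refine ⟨0, ?_⟩
    rw [zpow_zero]
    show (RingEquiv.refl K) a - a = τ 0 - 0
    simp
  | succ k ih =>
    obtain ⟨h, hh⟩ := ih
    refine ⟨(τ ^ (k : ℤ)) a + h, ?_⟩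
    have hpow : (τ ^ ((k : ℤ) + 1)) a = τ ((τ ^ (k : ℤ)) a) := by
      rw [add_comm, zpow_one_add]
      rfl
    rw [hpow, map_add]
    linear_combination hh
  | pred k ih =>
    obtain ⟨h, hh⟩ := ih
    refine ⟨h - (τ ^ (-(k : ℤ) - 1)) a, ?_⟩
    have hpow : (τ ^ (-(k : ℤ))) a = τ ((τ ^ (-(k : ℤ) - 1)) a) := by
      conv_lhs => rw [show (-(k : ℤ)) = 1 + (-(k : ℤ) - 1) by ring]
      rw [zpow_one_add]
      rfl
    rw [map_sub]
    rw [hpow] at hh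
    linear_combination hh

/-- For integers `β > 0` and `α`, if `f ∈ F(y,z)` is `σ_y^β σ_z^{-α}`-summable,
then `f` is `(σ_y,σ_z)`-summable. -/
theorem tau_summable_imp_bivariate_summable {K : Type*} [Field K] (σy σz : K ≃+* K)
    (hcomm : ∀ f : K, σy (σz f) = σz (σy f)) (α β : ℤ) (hβ : 0 < β) (f : K)
    (hf : ∃ g : K, f = (σy ^ β * σz ^ (-α)) g - g) :
    ∃ g h : K, f = (σy g - g) + (σz h - h) := by
  obtain ⟨g, hg⟩ := hf
  set a := (σz ^ (-α)) g with ha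
  have hmul : (σy ^ β * σz ^ (-α)) g = (σy ^ β) a := rfl
  obtain ⟨u, hu⟩ := zpow_sub_self_summable σy β a
  obtain ⟨v, hv⟩ := zpow_sub_self_summable σz (-α) g
  refine ⟨u, v, ?_⟩
  rw [hg, hmul, ← hu, ← hv, ← ha]
  ring
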